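/- Let R be a discrete valuation domain. Then every left R-module M is the union of a countable increasing chain of submodules {M_n : n < ω}, each of which is a direct sum of cyclic modules. Consequently, every R-module is filtered by (indeed is a countable totally ordered direct limit of) direct sums of cyclic modules. -/

import Mathlib

set_option maxHeartbeats 1000000

open Submodule Set

universe u

/-- `M` is (an internal) direct sum of cyclic modules. -/
def IsDirectSumOfCyclics (R : Type) [Ring R] (M : Type u) [AddCommGroup M]
    [Module R M] : Prop :=
  ∃ (ι : Type u) (N : ι → Submodule R M),
    (letI : DecidableEq ι := Classical.decEq ι; DirectSum.IsInternal N) ∧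
    ∀ i : ι, ∃ m : M, N i = Submodule.span R {m}

section Lemmas
variable {R : Type} [CommRing R] {W : Type u} [AddCommGroup W] [Module R W]

theorem iSup_span_diff (X : Set W) (x : W) (hx : x ∈ X) :
    (⨆ (y : X) (_ : y ≠ (⟨x, hx⟩ : X)), span R {(y : W)}) = span R (X \ {x}) := by
  apply le_antisymm
  · refine iSup₂_le ?_
    rintro ⟨y, hy⟩ hne
    have hmem : y ∈ X \ {x} := ⟨hy, fun h => hne (Subtype.ext h)⟩
    rw [span_le]
    exact Set.singleton_subset_iff.mpr (subset_span hmem)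
  · rw [span_le]
    rintro y ⟨hyX, hyx⟩
    have hne : (⟨y, hyX⟩ : X) ≠ ⟨x, hx⟩ := fun h => hyx (congrArg Subtype.val h)
    have hle : span R {y} ≤ ⨆ (y : X) (_ : y ≠ (⟨x, hx⟩ : X)), span R {(y : W)} :=
      le_iSup₂ (f := fun (y : X) (_ : y ≠ (⟨x, hx⟩ : X)) => span R {(y : W)}) ⟨y, hyX⟩ hne
    exact hle (mem_span_singleton_self y)

theorem isDirectSumOfCyclics_of_span_set (X : Set W)
    (hindep : ∀ x (hx : x ∈ X), Disjoint (span R {x}) (span R (X \ {x})))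
    (hspan : span R X = ⊤) : IsDirectSumOfCyclics R W := by
  refine ⟨↥X, fun x => span R {(x : W)}, ?_, fun x => ⟨x, rfl⟩⟩
  letI : DecidableEq ↥X := Classical.decEq _
  show DirectSum.IsInternal fun x : ↥X => span R {(x : W)}
  rw [DirectSum.isInternal_submodule_iff_iSupIndep_and_iSup_eq_top]
  constructor
  · rintro ⟨x, hx⟩
    rw [iSup_span_diff X x hx]
    exact hindep x hx
  · rw [← hspan, span_eq_iSup_of_singleton_spans X]
    exact iSup_subtype'' X fun y => span R {y}

theorem free_isDirectSumOfCyclics [Nontrivial R] [Module.Free R W] :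
    IsDirectSumOfCyclics R W := by
  let b := Module.Free.chooseBasis R W
  apply isDirectSumOfCyclics_of_span_set (Set.range b)
  · rintro _ ⟨i, rfl⟩
    refine Disjoint.mono_right ?_ (b.linearIndependent.iSupIndep_span_singleton i)
    rw [span_le]
    rintro _ ⟨⟨j, rfl⟩, hne⟩
    have hji : j ≠ i := fun h => hne (by rw [h]; rfl)
    have hle : span R {b j} ≤ ⨆ (j) (_ : j ≠ i), span R {b j} :=
      le_iSup₂ (f := fun (j) (_ : j ≠ i) => span R {b j}) j hji
    exact hle (mem_span_singleton_self _)
  · exact b.span_eq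

end Lemmas

section Combine
variable {R : Type} [CommRing R] {W : Type u} [AddCommGroup W] [Module R W]

theorem disjoint_map_inj {W' : Type v} [AddCommGroup W'] [Module R W']
    {f : W →ₗ[R] W'} (hf : Function.Injective f)
    {P Q : Submodule R W} (h : Disjoint P Q) :
    Disjoint (P.map f) (Q.map f) := by
  rw [disjoint_def]
  rintro _ ⟨p, hp, rfl⟩ hq
  obtain ⟨q, hq', he⟩ := hq
  have hqp : q = p := hf he
  subst hqp
  rw [Submodule.disjoint_def.mp h q hp hq', map_zero]

theorem isDirectSumOfCyclics_of_isCompl {A B : Submodule R W} (h : IsCompl A B)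
    (hA : IsDirectSumOfCyclics R ↥A) (hB : IsDirectSumOfCyclics R ↥B) :
    IsDirectSumOfCyclics R W := by
  obtain ⟨ι, NA, hIA, hCA⟩ := hA
  obtain ⟨κ, NB, hIB, hCB⟩ := hB
  letI : DecidableEq ι := Classical.decEq ι
  letI : DecidableEq κ := Classical.decEq κ
  have hIA' := (DirectSum.isInternal_submodule_iff_iSupIndep_and_iSup_eq_top NA).mp hIA
  have hIB' := (DirectSum.isInternal_submodule_iff_iSupIndep_and_iSup_eq_top NB).mp hIB
  refine ⟨ι ⊕ κ, Sum.elim (fun i => (NA i).map A.subtype) (fun j => (NB j).map B.subtype),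
    ?_, ?_⟩
  · letI : DecidableEq (ι ⊕ κ) := Classical.decEq _
    show DirectSum.IsInternal _
    rw [DirectSum.isInternal_submodule_iff_iSupIndep_and_iSup_eq_top]
    constructor
    · -- independence
      have main : ∀ (A B : Submodule R W), IsCompl A B →
          ∀ (ι κ : Type u) (NA : ι → Submodule R ↥A) (NB : κ → Submodule R ↥B)
          (a : ι), iSupIndep NA →
          Disjoint ((NA a).map A.subtype)
            (⨆ (y : ι ⊕ κ) (_ : y ≠ Sum.inl a),
              Sum.elim (fun i => (NA i).map A.subtype) (fun j => (NB j).map B.subtype) y) := by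
        intro A B h ι κ NA NB a hind
        have hbound : (⨆ (y : ι ⊕ κ) (_ : y ≠ Sum.inl a),
            Sum.elim (fun i => (NA i).map A.subtype) (fun j => (NB j).map B.subtype) y) ≤
            (⨆ (i) (_ : i ≠ a), (NA i).map A.subtype) ⊔ B := by
          refine iSup₂_le ?_
          rintro (i | j) hne
          · have hia : i ≠ a := fun hh => hne (by rw [hh])
            exact le_sup_of_le_left
              (le_iSup₂ (f := fun (i) (_ : i ≠ a) => (NA i).map A.subtype) i hia)
          · exact le_sup_of_le_right (Submodule.map_subtype_le B (NB j))
        refine Disjoint.mono_right hbound ?_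
        rw [disjoint_def]
        intro z hz hzsup
        have hzA : z ∈ A := Submodule.map_subtype_le A (NA a) hz
        obtain ⟨u, hu, v, hv, rfl⟩ := Submodule.mem_sup.mp hzsup
        have huA : u ∈ A := by
          refine iSup₂_le (fun i _ => Submodule.map_subtype_le A (NA i)) hu
        have hv0 : v = 0 := by
          have hvA : v ∈ A := by
            have : v = u + v - u := by abel
            rw [this]; exact Submodule.sub_mem _ hzA huA
          exact Submodule.disjoint_def.mp h.disjoint v hvA hv
        subst hv0
        rw [add_zero] at hz ⊢
        have hmap : (⨆ (i) (_ : i ≠ a), (NA i).map A.subtype) =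
            ((⨆ (i) (_ : i ≠ a), NA i)).map A.subtype := by
          simp_rw [Submodule.map_iSup]
        rw [hmap] at hu
        exact Submodule.disjoint_def.mp
          (disjoint_map_inj (Submodule.injective_subtype A) (hind a)) u hz hu
      intro x
      cases x with
      | inl a => exact main A B h ι κ NA NB a hIA'.1
      | inr b =>
        have hsymm := main B A h.symm κ ι NB NA b hIB'.1
        refine Disjoint.mono_right ?_ hsymm
        refine iSup₂_le ?_
        rintro (i | j) hne
        · have : (Sum.inr i : κ ⊕ ι) ≠ Sum.inl b := Sum.inr_ne_inl
          exact le_iSup₂ (f := fun (y : κ ⊕ ι) (_ : y ≠ Sum.inl b) =>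
            Sum.elim (fun i => (NB i).map B.subtype) (fun j => (NA j).map A.subtype) y)
            (Sum.inr i) this
        · have hjb : j ≠ b := fun hh => hne (by rw [hh])
          have : (Sum.inl j : κ ⊕ ι) ≠ Sum.inl b := fun hh => hjb (Sum.inl.inj hh)
          exact le_iSup₂ (f := fun (y : κ ⊕ ι) (_ : y ≠ Sum.inl b) =>
            Sum.elim (fun i => (NB i).map B.subtype) (fun j => (NA j).map A.subtype) y)
            (Sum.inl j) this
    · rw [iSup_sum]
      have h1 : (⨆ i, (NA i).map A.subtype) = A := by
        rw [← Submodule.map_iSup, hIA'.2, Submodule.map_top, Submodule.range_subtype]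
      have h2 : (⨆ j, (NB j).map B.subtype) = B := by
        rw [← Submodule.map_iSup, hIB'.2, Submodule.map_top, Submodule.range_subtype]
      simp only [Sum.elim_inl, Sum.elim_inr]
      rw [h1, h2]
      exact h.codisjoint.eq_top
  · rintro (i | j)
    · obtain ⟨m, hm⟩ := hCA i
      exact ⟨A.subtype m, by simp [hm, Submodule.map_span]⟩
    · obtain ⟨m, hm⟩ := hCB j
      exact ⟨B.subtype m, by simp [hm, Submodule.map_span]⟩

end Combine






section SubFree
variable {R : Type} [CommRing R] [IsDomain R] [IsPrincipalIdealRing R]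

theorem free_of_submodule_finsupp {ι : Type u} (N : Submodule R (ι →₀ R)) :
    Module.Free R ↥N := by
  classical
  obtain ⟨lo, wfi⟩ := exists_wellOrder ι
  set c : ι → Ideal R := fun i =>
    (N ⊓ Finsupp.supported R R (Set.Iic i)).map (Finsupp.lapply i) with hc
  have hprin : ∀ i, ∃ a : R, c i = Ideal.span {a} := fun i =>
    (IsPrincipalIdealRing.principal (c i)).principal
  choose a hspan using hprin
  have ha : ∀ i, a i ∈ c i := fun i => by
    rw [hspan i]; exact Ideal.subset_span rfl
  have hx : ∀ i, ∃ v : ι →₀ R, (v ∈ N ∧ v ∈ Finsupp.supported R R (Set.Iic i)) ∧ v i = a i := by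
    intro i
    rcases Submodule.mem_map.mp (ha i) with ⟨v, hv, hvi⟩
    exact ⟨v, Submodule.mem_inf.mp hv, hvi⟩
  choose x hxmem hxi using hx
  have hxN : ∀ i, x i ∈ N := fun i => (hxmem i).1
  have hxsupp : ∀ i j, i < j → x i j = 0 := by
    intro i j hij
    by_contra h
    have := (hxmem i).2 (Finsupp.mem_support_iff.mpr h)
    exact absurd this (by simpa using hij.not_ge)
  -- the span claim
  set sp : Submodule R (ι →₀ R) := span R (Set.range fun i : {i // a i ≠ 0} => x i) with hsp
  have key : ∀ i : ι, ∀ y ∈ N, (∀ j ∈ y.support, j ≤ i) → y ∈ sp := by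
    intro i
    refine WellFounded.induction (C := fun i => ∀ y ∈ N, (∀ j ∈ y.support, j ≤ i) → y ∈ sp) wellFounded_lt i ?_
    clear i; intro i IH y hyN hysupp
    by_cases hy0 : y = 0
    · simp [hy0]
    · have hsne : y.support.Nonempty := Finsupp.support_nonempty_iff.mpr hy0
      set i0 := y.support.max' hsne with hi0
      have hi0mem : i0 ∈ y.support := y.support.max'_mem hsne
      have hi0le : i0 ≤ i := hysupp _ hi0mem
      have hyi0 : y i0 ≠ 0 := Finsupp.mem_support_iff.mp hi0mem
      have hysup : y ∈ Finsupp.supported R R (Set.Iic i0) := by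
        rw [Finsupp.mem_supported]
        intro j hj
        exact Finset.le_max' _ j hj
      have hymem : y i0 ∈ c i0 := Submodule.mem_map.mpr
        ⟨y, Submodule.mem_inf.mpr ⟨hyN, hysup⟩, rfl⟩
      have hai0 : a i0 ≠ 0 := by
        intro h0
        rw [hspan i0, h0] at hymem
        simp [Ideal.span_singleton_eq_bot.mpr rfl] at hymem
        exact hyi0 hymem
      rw [hspan i0] at hymem
      obtain ⟨t, ht⟩ := Ideal.mem_span_singleton'.mp hymem
      set z := y - t • x i0 with hz
      have hzN : z ∈ N := Submodule.sub_mem _ hyN (Submodule.smul_mem _ _ (hxN i0))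
      have hzi0 : z i0 = 0 := by
        simp [hz, Finsupp.sub_apply, Finsupp.smul_apply, hxi i0, ← ht, smul_eq_mul]
      have hzsupp : ∀ j ∈ z.support, j < i0 := by
        intro j hj
        have hzj : z j ≠ 0 := Finsupp.mem_support_iff.mp hj
        have hjne : j ≠ i0 := fun h => hzj (h ▸ hzi0)
        have hjle : j ≤ i0 := by
          by_contra hgt
          push_neg at hgt
          have h1 : y j = 0 := by
            by_contra h
            exact absurd (Finset.le_max' _ j (Finsupp.mem_support_iff.mpr h)) hgt.not_ge
          have h2 : x i0 j = 0 := hxsupp i0 j hgt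
          simp [hz, Finsupp.sub_apply, Finsupp.smul_apply, h1, h2] at hzj
        exact lt_of_le_of_ne hjle hjne
      have hxsp : x i0 ∈ sp := subset_span ⟨⟨i0, hai0⟩, rfl⟩
      by_cases hz0 : z = 0
      · have : y = t • x i0 := by rw [← sub_eq_zero]; exact hz0
        rw [this]; exact Submodule.smul_mem _ _ hxsp
      · have hzne : z.support.Nonempty := Finsupp.support_nonempty_iff.mpr hz0
        set j1 := z.support.max' hzne with hj1
        have hj1lt : j1 < i := lt_of_lt_of_le (hzsupp _ (z.support.max'_mem hzne)) hi0le
        have hzsp : z ∈ sp := IH j1 hj1lt z hzN (fun j hj => Finset.le_max' _ j hj)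
        have : y = z + t • x i0 := by rw [hz]; abel
        rw [this]
        exact Submodule.add_mem _ hzsp (Submodule.smul_mem _ _ hxsp)
  -- linear independence
  have hli0 : LinearIndependent R (fun i : {i // a i ≠ 0} => x (i : ι)) := by
    rw [linearIndependent_iff']
    intro s g hsum i hi
    by_contra hgi
    set t := s.filter (fun j => g j ≠ 0) with htdef
    have htne : t.Nonempty := ⟨i, Finset.mem_filter.mpr ⟨hi, hgi⟩⟩
    set i0 := t.max' htne with hi0def
    have hi0t : i0 ∈ t := t.max'_mem htne
    have hi0s : i0 ∈ s := (Finset.mem_filter.mp hi0t).1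
    have hgi0 : g i0 ≠ 0 := (Finset.mem_filter.mp hi0t).2
    have hsum' : (∑ j ∈ s, g j • x (j:ι)) (i0:ι) = 0 := by rw [hsum]; rfl
    rw [Finsupp.finset_sum_apply] at hsum'
    have hterm : ∀ j ∈ s, (g j • x (j:ι)) (i0:ι) = if j = i0 then g i0 * a (i0:ι) else 0 := by
      intro j hj
      by_cases hji : j = i0
      · subst hji; simp [Finsupp.smul_apply, hxi]
      · by_cases hgj : g j = 0
        · simp [Finsupp.smul_apply, hgj, hji]
        · have hjt : j ∈ t := Finset.mem_filter.mpr ⟨hj, hgj⟩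
          have hlt : (j:ι) < (i0:ι) := by
            have hle : j ≤ i0 := Finset.le_max' _ _ hjt
            exact lt_of_le_of_ne hle (fun h => hji (Subtype.ext h))
          simp [Finsupp.smul_apply, hxsupp _ _ hlt, hji]
    rw [Finset.sum_congr rfl hterm, Finset.sum_ite_eq' s i0 (fun _ => g i0 * a (i0:ι))] at hsum'
    simp only [hi0s, if_true] at hsum'
    rcases mul_eq_zero.mp hsum' with h | h
    · exact hgi0 h
    · exact i0.2 h
  have hNle : N ≤ sp := by
    intro y hy
    by_cases hy0 : y = 0
    · simp [hy0]
    · have hne : y.support.Nonempty := Finsupp.support_nonempty_iff.mpr hy0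
      exact key (y.support.max' hne) y hy (fun j hj => Finset.le_max' _ j hj)
  have hspN : sp = N := by
    refine le_antisymm ?_ hNle
    rw [hsp, span_le]
    rintro _ ⟨i, rfl⟩
    exact hxN i
  exact Module.Free.of_basis ((Module.Basis.span hli0).map (LinearEquiv.ofEq _ _ hspN))


section Pruefer
variable {R : Type} [CommRing R] [IsDomain R] [IsDiscreteValuationRing R]
variable {W : Type u} [AddCommGroup W] [Module R W]

/-- purity with respect to powers of `p` -/
def IsPPure (p : R) (N : Submodule R W) : Prop :=
  ∀ (k : ℕ) (w : W), p ^ k • w ∈ N → ∃ y ∈ N, p ^ k • y = p ^ k • w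

theorem bounded_span_top {p : R} (hp : Irreducible p) (n : ℕ)
    (hW : ∀ w : W, p ^ n • w = 0) :
    ∃ X : Set W, (∀ x ∈ X, Disjoint (span R {x}) (span R (X \ {x}))) ∧
      span R X = ⊤ := by
  classical
  set Nice : Set W → Prop := fun X =>
    (∀ x ∈ X, Disjoint (span R {x}) (span R (X \ {x}))) ∧ IsPPure p (span R X)
    with hNiceDef
  have hzorn : ∃ X, Maximal (fun X => Nice X) X := by
    apply zorn_subset {X | Nice X}
    intro c hcS hchain
    refine ⟨⋃₀ c, ⟨?_, ?_⟩, fun X hX => subset_sUnion_of_mem hX⟩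
    · -- independence of the union
      intro x hx
      obtain ⟨X0, hX0c, hxX0⟩ := hx
      rw [disjoint_def]
      intro w hw1 hw2
      obtain ⟨T, hTsub, hwT⟩ := mem_span_finite_of_mem_span hw2
      have hTU : (T : Set W) ⊆ ⋃₀ c := hTsub.trans diff_subset
      have hTU' : (T : Set W) ⊆ ⋃ X ∈ c, X := by rwa [← sUnion_eq_biUnion]
      obtain ⟨X1, hX1c, hTX1⟩ :=
        hchain.directedOn.exists_mem_subset_of_finset_subset_biUnion ⟨X0, hX0c⟩ hTU'
      obtain ⟨X2, hX2c, hX02, hX12⟩ := hchain.directedOn X0 hX0c X1 hX1c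
      have hX2nice : Nice X2 := hcS hX2c
      have hTX2 : (T : Set W) ⊆ X2 \ {x} := fun t ht =>
        ⟨hX12 (hTX1 ht), (hTsub ht).2⟩
      have hwX2 : w ∈ span R (X2 \ {x}) := span_le.mpr
        (hTX2.trans subset_span) hwT
      exact Submodule.disjoint_def.mp (hX2nice.1 x (hX02 hxX0)) w hw1 hwX2
    · -- purity of the union
      intro k w hw
      obtain ⟨T, hTsub, hwT⟩ := mem_span_finite_of_mem_span hw
      by_cases hc0 : c.Nonempty
      · have hTU' : (T : Set W) ⊆ ⋃ X ∈ c, X := by rwa [← sUnion_eq_biUnion]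
        obtain ⟨X1, hX1c, hTX1⟩ :=
          hchain.directedOn.exists_mem_subset_of_finset_subset_biUnion hc0 hTU'
        have hX1nice : Nice X1 := hcS hX1c
        have hwX1 : p ^ k • w ∈ span R X1 := span_le.mpr
          (hTX1.trans subset_span) hwT
        obtain ⟨y, hyX1, hyy⟩ := hX1nice.2 k w hwX1
        exact ⟨y, span_mono (subset_sUnion_of_mem hX1c) hyX1, hyy⟩
      · rw [not_nonempty_iff_eq_empty] at hc0
        subst hc0
        simp only [sUnion_empty] at hw ⊢
        rw [span_empty, mem_bot] at hw
        exact ⟨0, zero_mem _, by rw [smul_zero, hw]⟩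
  obtain ⟨X, hmax⟩ := hzorn
  have hX : Nice X := hmax.prop
  refine ⟨X, hX.1, ?_⟩
  by_contra hne
  set N : Submodule R W := span R X with hN
  have hb0 : ∃ b0 : W, b0 ∉ N := by
    by_contra h; push_neg at h
    exact hne (eq_top_iff.mpr fun w _ => h w)
  obtain ⟨b0, hb0N⟩ := hb0
  set Q := W ⧸ N
  have hq0 : N.mkQ b0 ≠ 0 := fun h =>
    hb0N (by rwa [← Submodule.ker_mkQ N, LinearMap.mem_ker])
  set P : ℕ → Prop := fun e => ∃ q : Q, p ^ e • q ≠ 0 with hPdef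
  have hP0 : P 0 := ⟨N.mkQ b0, by rw [pow_zero, one_smul]; exact hq0⟩
  have hPn : ¬ P n := by
    rintro ⟨q, hq⟩
    obtain ⟨w, rfl⟩ := Submodule.mkQ_surjective N q
    exact hq (by rw [← map_smul, hW w, map_zero])
  have hn0 : n ≠ 0 := by rintro rfl; exact hPn hP0
  set m' := Nat.findGreatest P n with hm'
  have hPm' : P m' := Nat.findGreatest_spec (Nat.zero_le n) hP0
  have hm'n : m' < n := lt_of_le_of_ne (Nat.findGreatest_le n) (fun h => hPn (h ▸ hPm'))
  have hPm : ∀ q : Q, p ^ (m' + 1) • q = 0 := by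
    intro q
    by_contra hq
    exact Nat.findGreatest_is_greatest (Nat.lt_succ_self m') hm'n ⟨q, hq⟩
  have hkill : ∀ e : ℕ, m' + 1 ≤ e → ∀ q : Q, p ^ e • q = 0 := by
    intro e he q
    have h1 : e = (e - (m' + 1)) + (m' + 1) := by omega
    rw [h1, pow_add, mul_smul, hPm q, smul_zero]
  obtain ⟨q0, hq0'⟩ := hPm'
  obtain ⟨b, rfl⟩ := Submodule.mkQ_surjective N q0
  have hbN : p ^ (m' + 1) • b ∈ N := by
    rw [← Submodule.ker_mkQ N, LinearMap.mem_ker, map_smul]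
    exact hPm (N.mkQ b)
  obtain ⟨y, hyN, hy⟩ := hX.2 (m' + 1) b hbN
  set b' := b - y with hb'def
  have hb'1 : p ^ (m' + 1) • b' = 0 := by
    rw [hb'def, smul_sub, hy, sub_self]
  have hmkb' : N.mkQ b' = N.mkQ b := by
    rw [hb'def, map_sub]
    have : N.mkQ y = 0 := by rw [← LinearMap.mem_ker, Submodule.ker_mkQ]; exact hyN
    rw [this, sub_zero]
  have hb'ord : p ^ m' • N.mkQ b' ≠ 0 := by rw [hmkb']; exact hq0'
  have hb'N : b' ∉ N := by
    intro h
    apply hb'ord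
    have : N.mkQ b' = 0 := by rw [← LinearMap.mem_ker, Submodule.ker_mkQ]; exact h
    rw [this, smul_zero]
  -- key disjointness
  have hdisj : Disjoint (span R {b'}) N := by
    rw [disjoint_def]
    intro z hz hzN
    obtain ⟨r, rfl⟩ := mem_span_singleton.mp hz
    by_cases hr : r = 0
    · rw [hr, zero_smul]
    obtain ⟨k, u, hru⟩ := IsDiscreteValuationRing.eq_unit_mul_pow_irreducible hr hp
    subst hru
    have hQ0 : ((u : R) * p ^ k) • N.mkQ b' = 0 := by
      rw [← map_smul, ← LinearMap.mem_ker, Submodule.ker_mkQ]; exact hzN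
    have hpk : p ^ k • N.mkQ b' = 0 := by
      have h2 := congrArg (fun z : Q => ((u⁻¹ : Rˣ) : R) • z) hQ0
      simpa [smul_smul, ← mul_assoc, Units.inv_mul] using h2
    have hk : m' + 1 ≤ k := by
      by_contra hklt
      push_neg at hklt
      apply hb'ord
      have h3 : m' = (m' - k) + k := by omega
      rw [h3, pow_add, mul_smul, hpk, smul_zero]
    have h4 : (u : R) * p ^ k = ((u : R) * p ^ (k - (m' + 1))) * p ^ (m' + 1) := by
      rw [mul_assoc, ← pow_add]
      congr 2
      omega
    rw [h4, mul_smul, hb'1, smul_zero]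
  -- purity of the extended set
  have hpure' : IsPPure p (span R (insert b' X)) := by
    intro k w hw
    rw [span_insert] at hw
    obtain ⟨zb, hzb, z0, hz0, hsum⟩ := Submodule.mem_sup.mp hw
    obtain ⟨s, rfl⟩ := mem_span_singleton.mp hzb
    by_cases hdvd : p ^ (m' + 1) ∣ s
    · obtain ⟨t, rfl⟩ := hdvd
      have hzb0 : (p ^ (m' + 1) * t) • b' = 0 := by
        rw [mul_comm, mul_smul, hb'1, smul_zero]
      have hz : p ^ k • w ∈ N := by
        rw [← hsum, hzb0, zero_add]; exact hz0
      obtain ⟨y, hyN, hyy⟩ := hX.2 k w hz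
      exact ⟨y, span_mono (subset_insert _ _) hyN, hyy⟩
    · have hs0 : s ≠ 0 := fun h => hdvd (by rw [h]; exact dvd_zero _)
      obtain ⟨j, u, hru⟩ := IsDiscreteValuationRing.eq_unit_mul_pow_irreducible hs0 hp
      subst hru
      have hjlt : j < m' + 1 := by
        by_contra hj
        push_neg at hj
        refine hdvd ⟨(u : R) * p ^ (j - (m' + 1)), ?_⟩
        rw [mul_comm (p ^ (m' + 1)), mul_assoc, ← pow_add]
        congr 2
        omega
      have hk : k ≤ j := by
        by_contra hkj
        push_neg at hkj
        -- in the quotient : (u p^j) • mk b' = p^k • mk w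
        have hQ : ((u : R) * p ^ j) • N.mkQ b' = p ^ k • N.mkQ w := by
          have h5 : p ^ k • w - ((u : R) * p ^ j) • b' ∈ N := by
            rw [← hsum]; simpa using hz0
          have h6 : N.mkQ (p ^ k • w - ((u : R) * p ^ j) • b') = 0 := by
            rw [← LinearMap.mem_ker, Submodule.ker_mkQ]; exact h5
          rw [map_sub, map_smul, map_smul, sub_eq_zero] at h6
          exact h6.symm
        have hQ' : p ^ j • N.mkQ b' = ((u⁻¹ : Rˣ) : R) • p ^ k • N.mkQ w := by
          have h7 := congrArg (fun z : Q => ((u⁻¹ : Rˣ) : R) • z) hQ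
          rw [← mul_smul, ← mul_assoc, Units.inv_mul, one_mul] at h7
          exact h7
        apply hb'ord
        have h8' : m' - j + j = m' := by omega
        have h8 : p ^ m' • N.mkQ b' = p ^ (m' - j) • p ^ j • N.mkQ b' := by
          rw [← mul_smul, ← pow_add, h8']
        calc p ^ m' • N.mkQ b'
            = p ^ (m' - j) • p ^ j • N.mkQ b' := h8
          _ = p ^ (m' - j) • ((u⁻¹ : Rˣ) : R) • p ^ k • N.mkQ w := by rw [hQ']
          _ = ((u⁻¹ : Rˣ) : R) • p ^ (m' - j) • p ^ k • N.mkQ w := by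
              rw [smul_comm (p ^ (m' - j)) (((u⁻¹ : Rˣ) : R))]
          _ = ((u⁻¹ : Rˣ) : R) • p ^ (m' - j + k) • N.mkQ w := by
              rw [← mul_smul (p ^ (m' - j)) (p ^ k) (N.mkQ w), ← pow_add]
          _ = 0 := by rw [hkill (m' - j + k) (by omega) (N.mkQ w), smul_zero]
      -- now k ≤ j : produce the element
      set d := (u : R) * p ^ (j - k) with hd
      have hsb' : ((u : R) * p ^ j) • b' = p ^ k • (d • b') := by
        rw [← mul_smul, hd]
        have h9 : j - k + k = j := by omega
        rw [mul_comm (p ^ k), mul_assoc, ← pow_add, h9]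
      have hz0pk : z0 = p ^ k • (w - d • b') := by
        rw [smul_sub, ← hsb', eq_sub_iff_add_eq, add_comm, hsum]
      obtain ⟨y1, hy1N, hy1⟩ := hX.2 k (w - d • b') (by rw [← hz0pk]; exact hz0)
      refine ⟨d • b' + y1, ?_, ?_⟩
      · refine Submodule.add_mem _ ?_ (span_mono (subset_insert _ _) hy1N)
        exact Submodule.smul_mem _ _ (subset_span (mem_insert _ _))
      · rw [smul_add, hy1, ← hz0pk, ← hsb', hsum]
  -- independence of the extended set
  have hindep' : ∀ x ∈ insert b' X,
      Disjoint (span R {x}) (span R (insert b' X \ {x})) := by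
    intro x hx
    rcases mem_insert_iff.mp hx with rfl | hxX
    · refine Disjoint.mono_right ?_ hdisj
      rw [span_le]
      rintro z ⟨hz1, hz2⟩
      rcases mem_insert_iff.mp hz1 with rfl | hzX
      · exact absurd rfl hz2
      · exact subset_span hzX
    · rw [disjoint_def]
      intro z hzx hzsup
      have hsub : insert b' X \ {x} ⊆ insert b' (X \ {x}) := by
        rintro w ⟨hw1, hw2⟩
        rcases mem_insert_iff.mp hw1 with rfl | hwX
        · exact mem_insert _ _
        · exact mem_insert_of_mem _ ⟨hwX, hw2⟩
      have hzsup' : z ∈ span R {b'} ⊔ span R (X \ {x}) := by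
        rw [← span_insert]
        exact span_mono hsub hzsup
      obtain ⟨zb, hzb, z0, hz0, rfl⟩ := Submodule.mem_sup.mp hzsup'
      have hzN : zb + z0 ∈ N := span_mono (singleton_subset_iff.mpr hxX) hzx
      have hz0N : z0 ∈ N := span_mono diff_subset hz0
      have hzbN : zb ∈ N := by
        have h9 : zb = (zb + z0) - z0 := by abel
        rw [h9]
        exact Submodule.sub_mem _ hzN hz0N
      have hzb0 : zb = 0 := Submodule.disjoint_def.mp hdisj zb hzb hzbN
      rw [hzb0, zero_add] at hzx ⊢
      exact Submodule.disjoint_def.mp (hX.1 x hxX) z0 hzx hz0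
  -- contradiction with maximality
  have hb'X : b' ∉ X := fun h => hb'N (subset_span h)
  have hnice' : Nice (insert b' X) := ⟨hindep', hpure'⟩
  have := hmax.2 hnice' (subset_insert b' X)
  exact hb'X (this (mem_insert b' X))

end Pruefer


section Final
variable {R : Type} [CommRing R] [IsDomain R] [IsDiscreteValuationRing R]
variable {W : Type u} [AddCommGroup W] [Module R W]

theorem bounded_isDirectSumOfCyclics {p : R} (hp : Irreducible p) (n : ℕ)
    (hW : ∀ w : W, p ^ n • w = 0) : IsDirectSumOfCyclics R W := by
  obtain ⟨X, hindep, hspan⟩ := bounded_span_top hp n hW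
  exact isDirectSumOfCyclics_of_span_set X hindep hspan

end Final

/-- Over a discrete valuation domain, every module is the union of a countable increasing
chain of submodules each of which is a direct sum of cyclic modules. -/
theorem exists_countable_chain_of_directSumsOfCyclics
    (R : Type) [CommRing R] [IsDomain R] [IsDiscreteValuationRing R]
    (M : Type) [AddCommGroup M] [Module R M] :
    ∃ Mc : ℕ → Submodule R M, Monotone Mc ∧ (⨆ n : ℕ, Mc n) = ⊤ ∧
      ∀ n : ℕ, IsDirectSumOfCyclics R (↥(Mc n)) := by
  classical
  obtain ⟨p, hp⟩ := IsDiscreteValuationRing.exists_irreducible R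
  obtain ⟨I, hI, hImax⟩ := exists_maximal_linearIndepOn R (id : M → M)
  set M0 : Submodule R M := span R I with hM0
  set Mc : ℕ → Submodule R M :=
    fun n => Submodule.comap ((p ^ n) • (LinearMap.id : M →ₗ[R] M)) M0 with hMcDef
  have hMc : ∀ (n : ℕ) (x : M), x ∈ Mc n ↔ p ^ n • x ∈ M0 := by
    intro n x
    rw [hMcDef]
    simp [Submodule.mem_comap]
  refine ⟨Mc, ?_, ?_, ?_⟩
  · -- monotone
    apply monotone_nat_of_le_succ
    intro n x hx
    rw [hMc] at hx ⊢
    have h1 : p ^ (n + 1) • x = p • (p ^ n • x) := by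
      rw [← mul_smul, ← pow_succ']
    rw [h1]
    exact Submodule.smul_mem _ _ hx
  · -- the union is everything
    rw [eq_top_iff]
    intro x _
    by_cases hxI : x ∈ span R (id '' I)
    · apply Submodule.mem_iSup_of_mem 0
      rw [hMc]
      rw [Set.image_id] at hxI
      simpa using hxI
    · have hxnI : x ∉ I := fun h => hxI (subset_span (by simpa using h))
      obtain ⟨a, ha0, haI⟩ := hImax x hxnI
      obtain ⟨k, u, rfl⟩ := IsDiscreteValuationRing.eq_unit_mul_pow_irreducible ha0 hp
      apply Submodule.mem_iSup_of_mem k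
      rw [hMc]
      rw [Set.image_id] at haI
      have h2 : p ^ k • x = ((u⁻¹ : Rˣ) : R) • (((u : R) * p ^ k) • (id x)) := by
        rw [← mul_smul, ← mul_assoc, Units.inv_mul, one_mul]
        rfl
      rw [h2]
      exact Submodule.smul_mem _ _ haI
  · -- each term is a direct sum of cyclics
    intro n
    set B := ↥(Mc n) with hB
    set φ : B →ₗ[R] M := (p ^ n) • ((Mc n).subtype) with hφdef
    have hφ : ∀ x : B, φ x = p ^ n • (x : M) := fun x => rfl
    have hrange : LinearMap.range φ ≤ M0 := by
      rintro _ ⟨x, rfl⟩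
      rw [hφ]
      exact (hMc n x).mp x.2
    -- a basis for M0
    have hIli : LinearIndependent R (fun x : I => (x : M)) := hI
    have hre : span R (Set.range fun x : I => (x : M)) = M0 := by
      rw [Subtype.range_coe]
    let bs : Module.Basis ↥I R ↥M0 := (Module.Basis.span hIli).map (LinearEquiv.ofEq _ _ hre)
    -- the range of φ is free
    set P : Submodule R ↥M0 := Submodule.comap M0.subtype (LinearMap.range φ) with hP
    have e1 : ↥P ≃ₗ[R] ↥(LinearMap.range φ) := Submodule.comapSubtypeEquivOfLe hrange
    set P' : Submodule R (↥I →₀ R) := P.map (bs.repr : ↥M0 →ₗ[R] (↥I →₀ R)) with hP'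
    have e2 : ↥P ≃ₗ[R] ↥P' :=
      Submodule.equivMapOfInjective (bs.repr : ↥M0 →ₗ[R] (↥I →₀ R))
        (by exact bs.repr.injective) P
    haveI hfreeP' : Module.Free R ↥P' := free_of_submodule_finsupp P'
    haveI hfreeR : Module.Free R ↥(LinearMap.range φ) :=
      Module.Free.of_equiv (e2.symm.trans e1)
    haveI hfreeQ : Module.Free R (B ⧸ LinearMap.ker φ) :=
      Module.Free.of_equiv φ.quotKerEquivRange.symm
    -- split off the kernel
    obtain ⟨g, hg⟩ := Module.projective_lifting_property (LinearMap.ker φ).mkQ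
      (LinearMap.id : (B ⧸ LinearMap.ker φ) →ₗ[R] (B ⧸ LinearMap.ker φ))
      (Submodule.mkQ_surjective _)
    have hgsec : ∀ q, (LinearMap.ker φ).mkQ (g q) = q := fun q => LinearMap.ext_iff.mp hg q
    have hginj : Function.Injective g := fun a b h => by
      rw [← hgsec a, ← hgsec b, h]
    have hcompl : IsCompl (LinearMap.ker φ) (LinearMap.range g) := by
      constructor
      · rw [disjoint_def]
        rintro z hz ⟨q, rfl⟩
        have hq0 : q = 0 := by
          have h0 : (LinearMap.ker φ).mkQ (g q) = 0 := by
            rw [Submodule.mkQ_apply]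
            exact (Submodule.Quotient.mk_eq_zero _).mpr hz
          rw [← hgsec q, h0]
        rw [hq0, map_zero]
      · rw [codisjoint_iff_le_sup]
        intro b _
        refine Submodule.mem_sup.mpr ⟨b - g ((LinearMap.ker φ).mkQ b), ?_,
          g ((LinearMap.ker φ).mkQ b), ⟨_, rfl⟩, by abel⟩
        have hmem : (LinearMap.ker φ).mkQ (b - g ((LinearMap.ker φ).mkQ b)) = 0 := by
          rw [map_sub, hgsec, sub_self]
        exact (Submodule.Quotient.mk_eq_zero _).mp (by rwa [Submodule.mkQ_apply] at hmem)
    -- the kernel is bounded, hence a direct sum of cyclics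
    have hbdd : ∀ t : ↥(LinearMap.ker φ), p ^ n • t = 0 := by
      intro t
      have h1 : φ (t : B) = 0 := LinearMap.mem_ker.mp t.2
      exact Subtype.ext (Subtype.ext h1)
    have hker : IsDirectSumOfCyclics R ↥(LinearMap.ker φ) :=
      bounded_isDirectSumOfCyclics hp n hbdd
    -- the complement is free, hence a direct sum of cyclics
    haveI hfreeG : Module.Free R ↥(LinearMap.range g) :=
      Module.Free.of_equiv (LinearEquiv.ofInjective g hginj)
    have hrg : IsDirectSumOfCyclics R ↥(LinearMap.range g) :=
      free_isDirectSumOfCyclics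
    exact isDirectSumOfCyclics_of_isCompl hcompl hker hrg
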